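/- Let r : ℂ → ℂ be an entire function that takes real values on the real axis, let M ≥ 1 be an integer and N = 2M, and for z ≠ 0 set F_N(z) = r(z) + z^N·r(1/z). Let θ_j = π/(2M) + (π/M)·j and 𝓘_j = [θ_j, θ_{j+1}] for j = 0, …, N−1. If the function θ ↦ Im r(e^{iθ}) has at most J zeros in the half-open interval [π/(2M), π/(2M) + 2π), then for at least N − J of the indices j ∈ {0, …, N−1} there exists θ ∈ 𝓘_j with F_N(e^{iθ}) = 0. -/

import Mathlib

open Real Complex
open Topology

private lemma conj_conj_diff (r : ℂ → ℂ) (hr : Differentiable ℂ r) :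
    Differentiable ℂ fun z => (starRingEnd ℂ) (r ((starRingEnd ℂ) z)) := by
  intro z
  have h0 : HasDerivAt r (deriv r ((starRingEnd ℂ) z)) ((starRingEnd ℂ) z) :=
    (hr _).hasDerivAt
  rw [hasDerivAt_iff_tendsto_slope] at h0
  have hc : Filter.Tendsto (starRingEnd ℂ) (𝓝[≠] z) (𝓝[≠] ((starRingEnd ℂ) z)) := by
    apply tendsto_nhdsWithin_of_tendsto_nhds_of_eventually_within
    · exact (Complex.continuous_conj.tendsto z).mono_left nhdsWithin_le_nhds
    · filter_upwards [self_mem_nhdsWithin] with y hy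
      simp only [Set.mem_compl_iff, Set.mem_singleton_iff] at hy ⊢
      exact fun h => hy ((starRingEnd ℂ).injective h)
  have h1 := (Complex.continuous_conj.tendsto _).comp (h0.comp hc)
  have h2 : HasDerivAt (fun z => (starRingEnd ℂ) (r ((starRingEnd ℂ) z)))
      ((starRingEnd ℂ) (deriv r ((starRingEnd ℂ) z))) z := by
    rw [hasDerivAt_iff_tendsto_slope]
    have heq : ∀ y : ℂ, slope (fun w => (starRingEnd ℂ) (r ((starRingEnd ℂ) w))) z y
        = (starRingEnd ℂ) (slope r ((starRingEnd ℂ) z) ((starRingEnd ℂ) y)) := by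
      intro y
      simp only [slope_def_field, map_div₀, map_sub, Complex.conj_conj]
    exact h1.congr fun y => (heq y).symm
  exact h2.differentiableAt

private lemma schwarz (r : ℂ → ℂ) (hr : Differentiable ℂ r) (hreal : ∀ x : ℝ, (r x).im = 0)
    (z : ℂ) : r ((starRingEnd ℂ) z) = (starRingEnd ℂ) (r z) := by
  have hg : Differentiable ℂ fun w => (starRingEnd ℂ) (r ((starRingEnd ℂ) w)) :=
    conj_conj_diff r hr
  have heq : (fun w => (starRingEnd ℂ) (r ((starRingEnd ℂ) w))) = r := by
    apply AnalyticOnNhd.eq_of_frequently_eq (z₀ := (0:ℂ))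
      (analyticOnNhd_univ_iff_differentiable.mpr hg) (analyticOnNhd_univ_iff_differentiable.mpr hr)
    have htend : Filter.Tendsto (fun n : ℕ => ((((n:ℝ)+1)⁻¹ : ℝ) : ℂ)) Filter.atTop
        (𝓝[≠] (0:ℂ)) := by
      apply tendsto_nhdsWithin_of_tendsto_nhds_of_eventually_within
      · have : Filter.Tendsto (fun n : ℕ => ((n:ℝ)+1)⁻¹) Filter.atTop (𝓝 0) :=
          tendsto_one_div_add_atTop_nhds_zero_nat.congr (by intro n; rw [one_div])
        have := (Complex.continuous_ofReal.tendsto 0).comp this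
        rw [Complex.ofReal_zero] at this
        exact this
      · filter_upwards with n
        simp only [Set.mem_compl_iff, Set.mem_singleton_iff, Complex.ofReal_eq_zero]
        positivity
    apply htend.frequently
    apply Filter.Eventually.frequently
    filter_upwards with n
    have hx : ∀ x : ℝ, (starRingEnd ℂ) (r ((starRingEnd ℂ) (x:ℂ))) = r x := by
      intro x
      rw [Complex.conj_ofReal, Complex.conj_eq_iff_im.mpr (hreal x)]
    exact hx _
  have := congrFun heq ((starRingEnd ℂ) z)
  simp only [Complex.conj_conj] at this
  exact this.symm

private lemma factorF (r : ℂ → ℂ) (hrc : ∀ z, r ((starRingEnd ℂ) z) = (starRingEnd ℂ) (r z))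
    (M : ℕ) (θ : ℝ) :
    r (Complex.exp ((θ : ℝ) * Complex.I))
      + (Complex.exp ((θ : ℝ) * Complex.I)) ^ (2 * M)
        * r ((Complex.exp ((θ : ℝ) * Complex.I))⁻¹)
    = Complex.exp ((((M:ℝ) * θ : ℝ) : ℂ) * Complex.I)
      * (2 * ((Complex.exp (((-((M:ℝ)*θ) : ℝ) : ℂ) * Complex.I)
          * r (Complex.exp ((θ:ℝ) * Complex.I))).re : ℝ)) := by
  set e := Complex.exp ((θ : ℝ) * Complex.I) with he
  have hinv : e⁻¹ = (starRingEnd ℂ) e := by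
    rw [he, ← Complex.exp_conj, ← Complex.exp_neg]
    congr 1
    simp [Complex.conj_I]
  set E := Complex.exp ((((M:ℝ) * θ : ℝ) : ℂ) * Complex.I) with hE
  have hpow : e ^ (2 * M) = E * E := by
    rw [he, hE, ← Complex.exp_nat_mul, ← Complex.exp_add]
    congr 1
    push_cast
    ring
  have hEinv : Complex.exp (((-((M:ℝ)*θ) : ℝ) : ℂ) * Complex.I) = E⁻¹ := by
    rw [hE, ← Complex.exp_neg]
    congr 1
    push_cast
    ring
  have hconjE : (starRingEnd ℂ) E⁻¹ = E := by
    rw [hE, ← Complex.exp_neg, ← Complex.exp_conj]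
    congr 1
    simp [Complex.conj_I]
  rw [hinv, hrc, hpow, hEinv]
  set w := r e
  have hkey : E⁻¹ * w + (starRingEnd ℂ) (E⁻¹ * w) = ((2 * (E⁻¹ * w).re : ℝ) : ℂ) :=
    Complex.add_conj _
  have hEne : E ≠ 0 := Complex.exp_ne_zero _
  calc w + E * E * (starRingEnd ℂ) w
      = E * (E⁻¹ * w + (starRingEnd ℂ) (E⁻¹ * w)) := by
        rw [map_mul, hconjE]
        field_simp
        try ring
    _ = E * (2 * ((E⁻¹ * w).re : ℝ)) := by rw [hkey]; push_cast; ring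

private lemma endpointG (M : ℕ) (j : ℕ) (w : ℂ) (t : ℝ) (ht : (M:ℝ) * t = π/2 + π*j) :
    (Complex.exp (((-((M:ℝ)*t)) : ℝ) * Complex.I) * w).re = (-1:ℝ)^j * w.im := by
  have h1 : (((-((M:ℝ)*t)) : ℝ) : ℂ) * Complex.I
      = -(((π/2 : ℝ) : ℂ) * Complex.I) + -((j:ℕ) * (((π:ℝ):ℂ) * Complex.I)) := by
    rw [show ((-((M:ℝ)*t)) : ℝ) = -(π/2 + π*j) by rw [ht]]
    push_cast
    ring
  have h3 : Complex.exp (((π/2 : ℝ) : ℂ) * Complex.I) = Complex.I := by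
    rw [Complex.exp_mul_I, ← Complex.ofReal_cos, ← Complex.ofReal_sin,
      Real.cos_pi_div_two, Real.sin_pi_div_two]
    simp
  have hexp : Complex.exp ((((-((M:ℝ)*t)) : ℝ) : ℂ) * Complex.I)
      = (((-1:ℝ)^j : ℝ) : ℂ) * (-Complex.I) := by
    rw [h1, Complex.exp_add, Complex.exp_neg, Complex.exp_neg, Complex.exp_nat_mul,
      Complex.exp_pi_mul_I, h3, Complex.inv_I]
    push_cast
    rw [← inv_pow, inv_neg, inv_one]
    ring
  rw [hexp, mul_assoc, Complex.re_ofReal_mul]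
  simp [Complex.mul_re, Complex.I_re, Complex.I_im]

private lemma ivt_zero (f : ℝ → ℝ) (hf : Continuous f) {a b : ℝ} (hab : a ≤ b)
    (hmul : f a * f b < 0) : ∃ θ ∈ Set.Icc a b, f θ = 0 := by
  rcases mul_neg_iff.mp hmul with ⟨h1, h2⟩ | ⟨h1, h2⟩
  · obtain ⟨θ, hθ, h0⟩ := intermediate_value_Icc' hab hf.continuousOn ⟨h2.le, h1.le⟩
    exact ⟨θ, hθ, h0⟩
  · obtain ⟨θ, hθ, h0⟩ := intermediate_value_Icc hab hf.continuousOn ⟨h1.le, h2.le⟩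
    exact ⟨θ, hθ, h0⟩

/-- Key interval lemma: if a (bad) interval contains no zero of `F`, then the interior
contains a zero of `θ ↦ Im r(e^{iθ})`. -/
private lemma badInterval (r : ℂ → ℂ) (hr : Differentiable ℂ r)
    (hreal : ∀ x : ℝ, (r x).im = 0) (M : ℕ) (hM : 1 ≤ M) (j : ℕ)
    (hbad : ¬ ∃ θ ∈ Set.Icc (π / (2 * M) + π / M * (j : ℝ)) (π / (2 * M) + π / M * ((j : ℝ) + 1)),
        r (Complex.exp ((θ : ℝ) * Complex.I))
          + (Complex.exp ((θ : ℝ) * Complex.I)) ^ (2 * M)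
            * r ((Complex.exp ((θ : ℝ) * Complex.I))⁻¹) = 0) :
    ∃ θ ∈ Set.Ioo (π / (2 * M) + π / M * (j : ℝ)) (π / (2 * M) + π / M * ((j : ℝ) + 1)),
      (r (Complex.exp ((θ : ℝ) * Complex.I))).im = 0 := by
  have hrc := schwarz r hr hreal
  have hMR : (0:ℝ) < (M:ℝ) := by exact_mod_cast Nat.lt_of_lt_of_le Nat.zero_lt_one hM
  have hdpos : 0 < π / (M:ℝ) := div_pos Real.pi_pos hMR
  set a : ℝ := π / (2 * M) + π / M * (j : ℝ) with ha
  set b : ℝ := π / (2 * M) + π / M * ((j : ℝ) + 1) with hb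
  have hab : a ≤ b := by
    rw [ha, hb]; nlinarith [hdpos]
  set v : ℝ → ℝ := fun θ => (r (Complex.exp ((θ : ℝ) * Complex.I))).im with hv
  set g : ℝ → ℝ := fun θ => (Complex.exp (((-((M:ℝ)*θ) : ℝ) : ℂ) * Complex.I)
      * r (Complex.exp ((θ:ℝ) * Complex.I))).re with hg
  have hrcont : Continuous r := hr.continuous
  have hecont : Continuous fun θ : ℝ => Complex.exp ((θ : ℝ) * Complex.I) :=
    Complex.continuous_exp.comp (Complex.continuous_ofReal.mul continuous_const)
  have hvcont : Continuous v := Complex.continuous_im.comp (hrcont.comp hecont)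
  have hgcont : Continuous g := by
    apply Complex.continuous_re.comp
    apply Continuous.mul
    · exact Complex.continuous_exp.comp
        ((Complex.continuous_ofReal.comp ((continuous_const.mul continuous_id).neg)).mul
          continuous_const)
    · exact hrcont.comp hecont
  -- g θ = 0 gives a zero of F
  have hgzero : ∀ θ ∈ Set.Icc a b, g θ = 0 → False := by
    intro θ hθ h0
    apply hbad
    refine ⟨θ, hθ, ?_⟩
    rw [factorF r hrc M θ]
    rw [hg] at h0
    simp only at h0
    rw [h0]
    simp
  -- endpoint values
  have hMa : (M:ℝ) * a = π/2 + π * j := by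
    rw [ha]; field_simp; try ring
  have hMb : (M:ℝ) * b = π/2 + π * (j+1:ℕ) := by
    rw [hb]; push_cast; field_simp; try ring
  have hga : g a = (-1:ℝ)^j * v a := endpointG M j _ a hMa
  have hgb : g b = (-1:ℝ)^(j+1) * v b := endpointG M (j+1) _ b hMb
  by_contra hno
  push_neg at hno
  have hva : v a ≠ 0 := by
    intro h0
    exact hgzero a (Set.left_mem_Icc.mpr hab) (by rw [hga, h0, mul_zero])
  have hvb : v b ≠ 0 := by
    intro h0
    exact hgzero b (Set.right_mem_Icc.mpr hab) (by rw [hgb, h0, mul_zero])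
  have hnozero : ∀ θ ∈ Set.Icc a b, v θ ≠ 0 := by
    intro θ hθ
    rcases eq_or_lt_of_le hθ.1 with h | h
    · rw [← h]; exact hva
    rcases eq_or_lt_of_le hθ.2 with h' | h'
    · rw [h']; exact hvb
    · exact hno θ ⟨h, h'⟩
  have hvsign : 0 < v a * v b := by
    rcases lt_or_ge 0 (v a * v b) with h | h
    · exact h
    have : v a * v b < 0 := lt_of_le_of_ne h (mul_ne_zero hva hvb)
    obtain ⟨θ, hθ, h0⟩ := ivt_zero v hvcont hab this
    exact absurd h0 (hnozero θ hθ)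
  have hgsign : g a * g b < 0 := by
    have h1 : ((-1:ℝ)^j) * ((-1:ℝ)^j) = 1 := by
      rw [← pow_add]
      exact Even.neg_one_pow ⟨j, by ring⟩
    rw [hga, hgb, pow_succ]
    nlinarith [hvsign, h1]
  obtain ⟨θ, hθ, h0⟩ := ivt_zero g hgcont hab hgsign
  exact hgzero θ hθ h0

/-- For an entire function `r` that is real on the real axis and `N = 2M`,
if `θ ↦ Im r(e^{iθ})` has at most `J` zeros in `[π/(2M), π/(2M) + 2π)`, then for at least
`N - J` of the `N` intervals `𝓘_j = [θ_j, θ_{j+1}]`, `j = 0, …, N-1`, the function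
`F_N(z) = r(z) + z^N r(1/z)` has a zero `e^{iθ}` with `θ ∈ 𝓘_j`. -/
theorem F_has_many_zeros_on_circle
    (r : ℂ → ℂ) (hr : Differentiable ℂ r)
    (hreal : ∀ x : ℝ, (r x).im = 0)
    (M : ℕ) (hM : 1 ≤ M) (J : ℕ)
    (hfin : {θ : ℝ | θ ∈ Set.Ico (π / (2 * M)) (π / (2 * M) + 2 * π) ∧
      (r (Complex.exp ((θ : ℝ) * Complex.I))).im = 0}.Finite)
    (hcard : {θ : ℝ | θ ∈ Set.Ico (π / (2 * M)) (π / (2 * M) + 2 * π) ∧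
      (r (Complex.exp ((θ : ℝ) * Complex.I))).im = 0}.ncard ≤ J) :
    2 * M - J ≤ {j : ℕ | j < 2 * M ∧
      ∃ θ ∈ Set.Icc (π / (2 * M) + π / M * (j : ℝ)) (π / (2 * M) + π / M * ((j : ℝ) + 1)),
        r (Complex.exp ((θ : ℝ) * Complex.I))
          + (Complex.exp ((θ : ℝ) * Complex.I)) ^ (2 * M)
            * r ((Complex.exp ((θ : ℝ) * Complex.I))⁻¹) = 0}.ncard := by
  classical
  have hMR : (0:ℝ) < (M:ℝ) := by exact_mod_cast Nat.lt_of_lt_of_le Nat.zero_lt_one hM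
  have hdpos : 0 < π / (M:ℝ) := div_pos Real.pi_pos hMR
  set P : ℕ → Prop := fun j =>
    ∃ θ ∈ Set.Icc (π / (2 * M) + π / M * (j : ℝ)) (π / (2 * M) + π / M * ((j : ℝ) + 1)),
      r (Complex.exp ((θ : ℝ) * Complex.I))
        + (Complex.exp ((θ : ℝ) * Complex.I)) ^ (2 * M)
          * r ((Complex.exp ((θ : ℝ) * Complex.I))⁻¹) = 0 with hP
  have hSet : {j : ℕ | j < 2 * M ∧ P j} = ↑((Finset.range (2*M)).filter P) := by
    ext j
    simp [Finset.mem_filter, Finset.mem_range]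
  rw [hSet, Set.ncard_coe_finset]
  set B := (Finset.range (2*M)).filter (fun j => ¬ P j) with hB
  have hsplit : ((Finset.range (2*M)).filter P).card + B.card = 2*M := by
    rw [hB, Finset.card_filter_add_card_filter_not, Finset.card_range]
  have hBJ : B.card ≤ J := by
    have key : ∀ j ∈ B, ∃ θ, θ ∈ Set.Ioo (π / (2 * M) + π / M * (j : ℝ))
        (π / (2 * M) + π / M * ((j : ℝ) + 1)) ∧ (r (Complex.exp ((θ : ℝ) * Complex.I))).im = 0 := by
      intro j hj
      rw [hB, Finset.mem_filter] at hj
      obtain ⟨θ, h1, h2⟩ := badInterval r hr hreal M hM j hj.2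
      exact ⟨θ, h1, h2⟩
    choose! f hf1 hf2 using key
    have hmap : ∀ j ∈ B, f j ∈ hfin.toFinset := by
      intro j hj
      have hj2M : j < 2*M := by
        rw [hB, Finset.mem_filter, Finset.mem_range] at hj
        exact hj.1
      rw [Set.Finite.mem_toFinset]
      refine ⟨⟨?_, ?_⟩, hf2 j hj⟩
      · have := (hf1 j hj).1
        have h0 : (0:ℝ) ≤ π / M * (j:ℝ) := by positivity
        linarith
      · have := (hf1 j hj).2
        have h0 : π / M * ((j:ℝ) + 1) ≤ 2 * π := by
          have hj1 : (j:ℝ) + 1 ≤ 2*M := by exact_mod_cast hj2M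
          calc π / M * ((j:ℝ) + 1) ≤ π / M * (2*M) := by
                apply mul_le_mul_of_nonneg_left hj1 hdpos.le
            _ = 2 * π := by field_simp; try ring
        linarith
    have hinj : Set.InjOn f ↑B := by
      intro i hi k hk hik
      by_contra hne
      have hmono : ∀ p q : ℕ, p < q → f p ∈ Set.Ioo (π / (2 * M) + π / M * (p : ℝ))
          (π / (2 * M) + π / M * ((p : ℝ) + 1)) → f q ∈ Set.Ioo (π / (2 * M) + π / M * (q : ℝ))
          (π / (2 * M) + π / M * ((q : ℝ) + 1)) → f p < f q := by
        intro p q hpq h1 h2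
        have hcast : (p:ℝ) + 1 ≤ (q:ℝ) := by exact_mod_cast hpq
        have : π / M * ((p:ℝ) + 1) ≤ π / M * (q:ℝ) :=
          mul_le_mul_of_nonneg_left hcast hdpos.le
        have := h1.2
        have := h2.1
        linarith
      rcases Nat.lt_or_ge i k with h | h
      · have := hmono i k h (hf1 i hi) (hf1 k hk)
        rw [hik] at this
        exact lt_irrefl _ this
      · have hki : k < i := lt_of_le_of_ne h (fun hh => hne hh.symm)
        have := hmono k i hki (hf1 k hk) (hf1 i hi)
        rw [hik] at this
        exact lt_irrefl _ this
    calc B.card ≤ hfin.toFinset.card := Finset.card_le_card_of_injOn f hmap hinj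
      _ ≤ J := by
        rw [← Set.ncard_eq_toFinset_card _ hfin]
        exact hcard
  omega
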